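/- Let U be a ring-supporting subset of ℤ containing an infinite interval. Then exactly one of the following holds: (a) U = ℤ; (b) U is an additive submonoid of ℕ; (c) U is an additive submonoid of the nonpositive integers. -/

import Mathlib

/-- A subset `U` of an additive commutative group containing `0` is ring-supporting if
for all `u, v, w ∈ U` with `u + v + w ∈ U`, one has `u + v ∈ U ↔ v + w ∈ U`. -/
def AddRingSupporting {A : Type*} [AddCommGroup A] (U : Set A) : Prop :=
  (0 : A) ∈ U ∧ ∀ u ∈ U, ∀ v ∈ U, ∀ w ∈ U, u + v + w ∈ U → (u + v ∈ U ↔ v + w ∈ U)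

/-- The stabilizer `(U : U) = {a | a + U = U}` of a subset `U` of an additive group. -/
def AddStab {A : Type*} [AddCommGroup A] (U : Set A) : Set A :=
  {a : A | (a + ·) '' U = U}

lemma closure_of_Ici (U : Set ℤ) (hU : AddRingSupporting U) (m : ℤ)
    (hm : Set.Ici m ⊆ U) : ∀ u ∈ U, ∀ v ∈ U, u + v ∈ U := by
  intro u hu v hv
  set w := max m (max (m - (u + v)) (m - v)) with hwdef
  have h1 : m ≤ w := le_max_left _ _
  have h2 : m - (u + v) ≤ w := le_trans (le_max_left _ _) (le_max_right _ _)
  have h3 : m - v ≤ w := le_trans (le_max_right _ _) (le_max_right _ _)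
  have hwU : w ∈ U := hm h1
  have hsum : u + v + w ∈ U := hm (by simp only [Set.mem_Ici]; omega)
  have hvw : v + w ∈ U := hm (by simp only [Set.mem_Ici]; omega)
  exact (hU.2 u hu v hv w hwU hsum).2 hvw

lemma univ_of_Ici (U : Set ℤ) (h0 : (0 : ℤ) ∈ U) (m : ℤ) (hm : Set.Ici m ⊆ U)
    (hc : ∀ u ∈ U, ∀ v ∈ U, u + v ∈ U) (a : ℤ) (ha : a ∈ U) (hneg : a < 0) :
    U = Set.univ := by
  have hmul : ∀ k : ℕ, (k : ℤ) * a ∈ U := by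
    intro k
    induction k with
    | zero => simpa using h0
    | succ k ih =>
      have h' := hc _ ih _ ha
      have heq : ((k + 1 : ℕ) : ℤ) * a = (k : ℤ) * a + a := by push_cast; ring
      rwa [heq]
  ext n
  simp only [Set.mem_univ, iff_true]
  set k := (m - n).toNat with hkdef
  have hk1 : m - n ≤ (k : ℤ) := Int.self_le_toNat _
  have hk0 : (0 : ℤ) ≤ (k : ℤ) := Int.natCast_nonneg k
  have hka : (k : ℤ) * a ≤ (k : ℤ) * (-1) := by
    apply mul_le_mul_of_nonneg_left (by omega) hk0
  have hmem : n - (k : ℤ) * a ∈ U := hm (by simp only [Set.mem_Ici]; nlinarith)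
  have h' := hc _ (hmul k) _ hmem
  have heq : (k : ℤ) * a + (n - (k : ℤ) * a) = n := by ring
  rwa [heq] at h'

theorem ringSupporting_with_infinite_interval (U : Set ℤ) (hU : AddRingSupporting U)
    (h : ∃ m : ℤ, Set.Ici m ⊆ U ∨ Set.Iic m ⊆ U) :
    (U = Set.univ ∧
        ¬(U ⊆ Set.Ici (0 : ℤ) ∧ ∀ u ∈ U, ∀ v ∈ U, u + v ∈ U) ∧
        ¬(U ⊆ Set.Iic (0 : ℤ) ∧ ∀ u ∈ U, ∀ v ∈ U, u + v ∈ U)) ∨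
    (U ≠ Set.univ ∧
        (U ⊆ Set.Ici (0 : ℤ) ∧ ∀ u ∈ U, ∀ v ∈ U, u + v ∈ U) ∧
        ¬(U ⊆ Set.Iic (0 : ℤ) ∧ ∀ u ∈ U, ∀ v ∈ U, u + v ∈ U)) ∨
    (U ≠ Set.univ ∧
        ¬(U ⊆ Set.Ici (0 : ℤ) ∧ ∀ u ∈ U, ∀ v ∈ U, u + v ∈ U) ∧
        (U ⊆ Set.Iic (0 : ℤ) ∧ ∀ u ∈ U, ∀ v ∈ U, u + v ∈ U)) := by
  obtain ⟨m, hm | hm⟩ := h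
  · -- Ici case
    have hc : ∀ u ∈ U, ∀ v ∈ U, u + v ∈ U := closure_of_Ici U hU m hm
    by_cases hneg : ∃ a ∈ U, a < 0
    · obtain ⟨a, ha, ha'⟩ := hneg
      have huniv : U = Set.univ := univ_of_Ici U hU.1 m hm hc a ha ha'
      refine Or.inl ⟨huniv, ?_, ?_⟩
      · rintro ⟨hsub, -⟩
        have : (-1 : ℤ) ∈ U := huniv ▸ Set.mem_univ _
        have := hsub this
        simp at this
      · rintro ⟨hsub, -⟩
        have : (1 : ℤ) ∈ U := huniv ▸ Set.mem_univ _
        have := hsub this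
        simp at this
    · push_neg at hneg
      refine Or.inr (Or.inl ⟨?_, ⟨fun x hx => hneg x hx, hc⟩, ?_⟩)
      · intro huniv
        have : (-1 : ℤ) ∈ U := huniv ▸ Set.mem_univ _
        exact absurd (hneg _ this) (by norm_num)
      · rintro ⟨hsub, -⟩
        have hp : max m 1 ∈ U := hm (Set.mem_Ici.mpr (le_max_left _ _))
        have := hsub hp
        simp only [Set.mem_Iic] at this
        have : (1 : ℤ) ≤ max m 1 := le_max_right _ _
        omega
  · -- Iic case: transfer through negation
    set V : Set ℤ := {x : ℤ | -x ∈ U} with hVdef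
    have hUV : ∀ x : ℤ, x ∈ U ↔ -x ∈ V := by
      intro x; simp [hVdef]
    have hV : AddRingSupporting V := by
      refine ⟨by simpa [hVdef] using hU.1, ?_⟩
      intro u hu v hv w hw hsum
      have h' := hU.2 (-u) hu (-v) hv (-w) hw (by
        have : -u + -v + -w = -(u + v + w) := by ring
        rw [this]; exact hsum)
      have e1 : -u + -v = -(u + v) := by ring
      have e2 : -v + -w = -(v + w) := by ring
      rw [e1, e2] at h'
      exact h'
    have hmV : Set.Ici (-m) ⊆ V := by
      intro x hx
      simp only [Set.mem_Ici] at hx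
      exact hm (by simp only [Set.mem_Iic]; omega)
    have hcV : ∀ u ∈ V, ∀ v ∈ V, u + v ∈ V := closure_of_Ici V hV (-m) hmV
    have hc : ∀ u ∈ U, ∀ v ∈ U, u + v ∈ U := by
      intro u hu v hv
      have := hcV (-u) ((hUV u).1 hu) (-v) ((hUV v).1 hv)
      have e : -u + -v = -(u + v) := by ring
      rw [e] at this
      simpa [hVdef] using this
    by_cases hpos : ∃ a ∈ U, 0 < a
    · obtain ⟨a, ha, ha'⟩ := hpos
      have hVuniv : V = Set.univ :=
        univ_of_Ici V hV.1 (-m) hmV hcV (-a) ((hUV a).1 ha) (by omega)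
      have huniv : U = Set.univ := by
        ext n
        simp only [Set.mem_univ, iff_true]
        exact (hUV n).2 (hVuniv ▸ Set.mem_univ _)
      refine Or.inl ⟨huniv, ?_, ?_⟩
      · rintro ⟨hsub, -⟩
        have : (-1 : ℤ) ∈ U := huniv ▸ Set.mem_univ _
        have := hsub this
        simp at this
      · rintro ⟨hsub, -⟩
        have : (1 : ℤ) ∈ U := huniv ▸ Set.mem_univ _
        have := hsub this
        simp at this
    · push_neg at hpos
      refine Or.inr (Or.inr ⟨?_, ?_, ⟨fun x hx => hpos x hx, hc⟩⟩)
      · intro huniv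
        have : (1 : ℤ) ∈ U := huniv ▸ Set.mem_univ _
        exact absurd (hpos _ this) (by norm_num)
      · rintro ⟨hsub, -⟩
        have hp : min m (-1) ∈ U := hm (Set.mem_Iic.mpr (min_le_left _ _))
        have := hsub hp
        simp only [Set.mem_Ici] at this
        have : min m (-1) ≤ -1 := min_le_right _ _
        omega
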